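/- Suppose the linear functional ⟨·⟩ is reflection positive for reflections through edges and the two-point function G_L is torus symmetric. Then for any i ∈ {1,…,d} and any y ∈ T_L with y·e_i = 0 (possibly y = o), the function n ↦ G_L(o, y + n·e_i) + G_L(o, n·e_i) is non-increasing as n ranges over the odd integers in the interval (0, L/2). -/
import Mathlib


namespace RPPaper

/-- The torus `T_L = (ℤ/Lℤ)^d`. -/
abbrev Torus (d L : ℕ) : Type := Fin d → ZMod L

/-- The unit vector `e i`. -/
def unitVec {d L : ℕ} (i : Fin d) : Torus d L := fun k => if k = i then 1 else 0

/-- The point `a • e i` on the torus. -/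
def axis {d L : ℕ} (i : Fin d) (a : ZMod L) : Torus d L := fun k => if k = i then a else 0

/-- The integer representative of `a : ZMod L` in the interval `(-L/2, L/2]`. -/
def coordRep (L : ℕ) [NeZero L] (a : ZMod L) : ℤ :=
  if (a.val : ℤ) ≤ (L : ℤ) / 2 then (a.val : ℤ) else (a.val : ℤ) - (L : ℤ)

/-- The reflection of the torus in the hyperplane `{z : z·e i = t/2}` (here `t = 2m`);
it is a reflection through edges if `t` is odd, and through vertices if `t` is even. -/
def reflect {d L : ℕ} (i : Fin d) (t : ℕ) (x : Torus d L) : Torus d L :=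
  Function.update x i ((t : ZMod L) - x i)

/-- The positive half `T_L^+` of the torus associated to the reflection in the hyperplane
`{z : z·e i = t/2}`. -/
def posHalf (d L : ℕ) [NeZero L] (i : Fin d) (t : ℕ) : Finset (Torus d L) :=
  if t % 2 = 1 then Finset.univ.filter (fun x => (x i - (((t + 1) / 2 : ℕ) : ZMod L)).val < L / 2)
  else Finset.univ.filter (fun x => (x i - ((t / 2 : ℕ) : ZMod L)).val ≤ L / 2)

/-- The negative half `T_L^- = θ(T_L^+)`. -/
def negHalf (d L : ℕ) [NeZero L] (i : Fin d) (t : ℕ) : Finset (Torus d L) :=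
  (posHalf d L i t).image (reflect i t)

/-- The state space `S = ∏_{x ∈ T_L} Σ_x` (all local state spaces equal to `Sig`). -/
abbrev MState (d L : ℕ) (Sig : Type*) : Type _ := Torus d L → Sig

/-- `A : S → ℝ` has domain `D` if it depends only on the local states in `D`. -/
def HasDomain {d L : ℕ} {Sig : Type*} (A : MState d L Sig → ℝ) (D : Set (Torus d L)) : Prop :=
  ∀ w₁ w₂ : MState d L Sig, (∀ x ∈ D, w₁ x = w₂ x) → A w₁ = A w₂

/-- The action `θA (w) = A (θ w)`, where `(θ w) x = w (θ x)`, of the reflection on functions. -/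
def reflectFun {d L : ℕ} {Sig : Type*} (i : Fin d) (t : ℕ) (A : MState d L Sig → ℝ) :
    MState d L Sig → ℝ := fun w => A (fun x => w (reflect i t x))

/-- `⟨·⟩` is reflection positive with respect to the reflection in the hyperplane
`{z : z·e i = t/2}`: for all `A, B ∈ A_L^+` (members of the algebra with domain `T_L^+`),
`⟨A·θB⟩ = ⟨B·θA⟩` and `⟨A·θA⟩ ≥ 0`. -/
def IsRP {d L : ℕ} {Sig : Type*} [NeZero L] (AL : Subalgebra ℝ (MState d L Sig → ℝ))
    (phi : (MState d L Sig → ℝ) →ₗ[ℝ] ℝ) (i : Fin d) (t : ℕ) : Prop :=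
  ∀ A B : MState d L Sig → ℝ, A ∈ AL → B ∈ AL →
    HasDomain A ↑(posHalf d L i t) → HasDomain B ↑(posHalf d L i t) →
    phi (A * reflectFun i t B) = phi (B * reflectFun i t A) ∧ 0 ≤ phi (A * reflectFun i t A)

/-- Reflection positivity for all reflections through edges. -/
def RPEdges {d L : ℕ} {Sig : Type*} [NeZero L] (AL : Subalgebra ℝ (MState d L Sig → ℝ))
    (phi : (MState d L Sig → ℝ) →ₗ[ℝ] ℝ) : Prop :=
  ∀ (i : Fin d) (t : ℕ), t < 2 * L → t % 2 = 1 → IsRP AL phi i t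

/-- Reflection positivity for all reflections through vertices. -/
def RPVertices {d L : ℕ} {Sig : Type*} [NeZero L] (AL : Subalgebra ℝ (MState d L Sig → ℝ))
    (phi : (MState d L Sig → ℝ) →ₗ[ℝ] ℝ) : Prop :=
  ∀ (i : Fin d) (t : ℕ), t < 2 * L → t % 2 = 0 → IsRP AL phi i t

/-- The single-site function `F^j_x`, obtained from a function `f : Sig → ℝ` of the local
state at the origin by the (path-independent) sequence of reflections sending `o` to `x`. -/
def site {d L : ℕ} {Sig : Type*} (f : Sig → ℝ) (x : Torus d L) : MState d L Sig → ℝ :=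
  fun w => f (w x)

/-- The two-point function `G_L(x,y) = ⟨F²_x F²_y ∏_{z ≠ x,y} F¹_z⟩`. -/
noncomputable def twoPoint {d L : ℕ} {Sig : Type*} [NeZero L]
    (phi : (MState d L Sig → ℝ) →ₗ[ℝ] ℝ) (f1 f2 : Sig → ℝ) (x y : Torus d L) : ℝ :=
  phi (fun w => f2 (w x) * f2 (w y) * ∏ z ∈ (Finset.univ.erase x).erase y, f1 (w z))

/-- Torus symmetry: `⟨∏_{x∈A}F¹_x ∏_{x∈B}F²_x⟩ = ⟨∏_{x∈A+z}F¹_x ∏_{x∈B+z}F²_x⟩`. -/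
def TorusSymmetric {d L : ℕ} {Sig : Type*} [NeZero L]
    (phi : (MState d L Sig → ℝ) →ₗ[ℝ] ℝ) (f1 f2 : Sig → ℝ) : Prop :=
  ∀ (A B : Finset (Torus d L)) (z : Torus d L),
    phi (fun w => (∏ x ∈ A, f1 (w x)) * ∏ x ∈ B, f2 (w x)) =
      phi (fun w => (∏ x ∈ A, f1 (w (x + z))) * ∏ x ∈ B, f2 (w (x + z)))


/-! ### Auxiliary lemmas -/

section AuxGeom

set_option linter.unusedSectionVars false

variable {d L : ℕ} [NeZero L] {Sig : Type*}

lemma reflect_apply_self {i : Fin d} {t : ℕ} (x : Torus d L) :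
    reflect i t x i = (t : ZMod L) - x i := by
  simp [reflect]

lemma reflect_apply_ne {i k : Fin d} {t : ℕ} (x : Torus d L) (h : k ≠ i) :
    reflect i t x k = x k := by
  simp [reflect, Function.update_of_ne h]

lemma reflect_reflect (i : Fin d) (t : ℕ) (x : Torus d L) :
    reflect i t (reflect i t x) = x := by
  funext k
  by_cases h : k = i
  · subst h
    rw [reflect_apply_self, reflect_apply_self]
    ring
  · rw [reflect_apply_ne _ h, reflect_apply_ne _ h]

lemma reflect_injective (i : Fin d) (t : ℕ) :
    Function.Injective (reflect (d := d) (L := L) i t) :=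
  Function.Involutive.injective (reflect_reflect i t)

lemma zmod_val_neg_add_one (hL : Even L) (c : ZMod L) :
    (-(c + 1)).val = L - 1 - c.val := by
  have hL0 : 0 < L := Nat.pos_of_ne_zero (NeZero.ne L)
  have hv : c.val < L := ZMod.val_lt c
  have hc : ((c.val : ℕ) : ZMod L) = c := ZMod.natCast_rightInverse c
  have h1 : ((L - 1 - c.val : ℕ) : ZMod L) = -(c + 1) := by
    have he : (L - 1 - c.val) + (1 + c.val) = L := by omega
    have h2 : (((L - 1 - c.val) : ℕ) : ZMod L) + ((1 + c.val : ℕ) : ZMod L) = 0 := by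
      rw [← Nat.cast_add, he, ZMod.natCast_self]
    have h3 : ((1 + c.val : ℕ) : ZMod L) = 1 + c := by push_cast [hc]; ring
    rw [h3] at h2
    have h4 := eq_neg_of_add_eq_zero_left h2
    rw [h4]; ring
  rw [← h1, ZMod.val_natCast_of_lt (by omega)]

lemma mem_posHalf_one {i : Fin d} (x : Torus d L) :
    x ∈ posHalf d L i 1 ↔ (x i - 1).val < L / 2 := by
  have : ((1 + 1) / 2 : ℕ) = 1 := rfl
  simp [posHalf, this, Finset.mem_filter]

lemma reflect_one_mem_iff (hL : Even L) {i : Fin d} (x : Torus d L) :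
    reflect i 1 x ∈ posHalf d L i 1 ↔ x ∉ posHalf d L i 1 := by
  rw [mem_posHalf_one, mem_posHalf_one, reflect_apply_self]
  have h1 : ((1 : ℕ) : ZMod L) - x i - 1 = -((x i - 1) + 1) := by push_cast; ring
  rw [h1, zmod_val_neg_add_one hL]
  have hv : (x i - 1).val < L := ZMod.val_lt _
  obtain ⟨t, ht⟩ := hL
  omega

lemma notMem_of_reflect_one_mem (hL : Even L) {i : Fin d} {x : Torus d L}
    (hx : x ∈ posHalf d L i 1) : reflect i 1 x ∉ posHalf d L i 1 := by
  intro h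
  have h2 := (reflect_one_mem_iff (i := i) hL (reflect i 1 x)).mp
  rw [reflect_reflect] at h2
  exact h2 hx h

lemma image_reflect_posHalf (hL : Even L) (i : Fin d) :
    (posHalf d L i 1).image (reflect i 1) = (posHalf d L i 1)ᶜ := by
  ext z
  simp only [Finset.mem_image, Finset.mem_compl]
  constructor
  · rintro ⟨w, hw, rfl⟩
    exact notMem_of_reflect_one_mem hL hw
  · intro hz
    exact ⟨reflect i 1 z, (reflect_one_mem_iff hL z).mpr hz, reflect_reflect i 1 z⟩

lemma axis_apply_self (i : Fin d) (a : ZMod L) : axis i a i = a := by simp [axis]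

lemma axis_add (i : Fin d) (a b : ZMod L) :
    axis i a + axis i b = axis (L := L) i (a + b) := by
  funext k
  by_cases h : k = i <;> simp [axis, h]

lemma axis_sub (i : Fin d) (a b : ZMod L) :
    axis i a - axis i b = axis (L := L) i (a - b) := by
  funext k
  by_cases h : k = i <;> simp [axis, h]

lemma axis_neg (i : Fin d) (a : ZMod L) :
    axis (L := L) i (-a) = - axis i a := by
  funext k
  by_cases h : k = i <;> simp [axis, h]

lemma axis_zero (i : Fin d) : axis (L := L) i 0 = 0 := by
  funext k
  by_cases h : k = i <;> simp [axis, h]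

lemma reflect_one_add_axis {i : Fin d} {y : Torus d L} (hy : y i = 0) (a : ZMod L) :
    reflect i 1 (y + axis i a) = y + axis i (1 - a) := by
  funext k
  by_cases h : k = i
  · subst h
    rw [reflect_apply_self]
    simp [axis, hy]
  · rw [reflect_apply_ne _ h]
    simp [axis, h]

lemma reflect_one_axis (i : Fin d) (a : ZMod L) :
    reflect i 1 (axis i a) = axis (L := L) i (1 - a) := by
  have h := reflect_one_add_axis (i := i) (y := (0 : Torus d L)) rfl a
  simpa using h

end AuxGeom

/-! ### The endgame: discrete convexity implies monotonicity -/

lemma endgame {L : ℕ} [NeZero L] (hL : Even L) (g : ZMod L → ℝ)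
    (conv : ∀ j j' : ℕ, j < L / 2 → j' < L / 2 →
      2 * g ((1 + j + j' : ℕ)) ≤ g ((1 + 2 * j : ℕ)) + g ((1 + 2 * j' : ℕ)))
    (symm : ∀ c : ZMod L, g (-c) = g c)
    (m n : ℕ) (hm : Odd m) (hn : Odd n) (hmn : m ≤ n) (hnL : 2 * n < L) :
    g n ≤ g m := by
  obtain ⟨t, ht⟩ := hL
  have conv' : ∀ r r' : ℕ, Odd r → Odd r' → r < L → r' < L →
      2 * g (((r + r') / 2 : ℕ)) ≤ g r + g r' := by
    intro r r' hr hr' h h'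
    obtain ⟨j, rfl⟩ := hr
    obtain ⟨j', rfl⟩ := hr'
    have e1 : (2 * j + 1 + (2 * j' + 1)) / 2 = 1 + j + j' := by omega
    have e2 : 2 * j + 1 = 1 + 2 * j := by omega
    have e3 : 2 * j' + 1 = 1 + 2 * j' := by omega
    rw [e1, e2, e3]
    exact conv j j' (by omega) (by omega)
  have hcast : ∀ p q : ℕ, p + q = L → ((p : ℕ) : ZMod L) = -((q : ℕ) : ZMod L) := by
    intro p q hpq
    have h0 : (((p + q : ℕ)) : ZMod L) = 0 := by rw [hpq]; exact ZMod.natCast_self L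
    push_cast at h0
    linear_combination h0
  have step : ∀ k n : ℕ, L - n ≤ k → Odd n → 3 ≤ n → 2 * n ≤ L → g n ≤ g ((n - 2 : ℕ)) := by
    intro k
    induction k with
    | zero => intro n hk hn h3 h2; omega
    | succ k ih =>
      intro n hk hn h3 h2
      obtain ⟨b, hb⟩ := hn
      have hcv := conv' (n - 2) (n + 2) ⟨b - 1, by omega⟩ ⟨b + 1, by omega⟩
        (by omega) (by omega)
      have hmid : (n - 2 + (n + 2)) / 2 = n := by omega
      rw [hmid] at hcv
      by_cases hcase : 2 * (n + 2) ≤ L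
      · have h4 := ih (n + 2) (by omega) ⟨b + 1, by omega⟩ (by omega) hcase
        have e : (n + 2 - 2 : ℕ) = n := by omega
        rw [e] at h4
        linarith
      · by_cases hc2 : L = 2 * n
        · have e : ((n + 2 : ℕ) : ZMod L) = -((n - 2 : ℕ) : ZMod L) := by
            apply hcast; omega
          rw [e, symm] at hcv
          linarith
        · have hc3 : L = 2 * n + 2 := by omega
          have e : ((n + 2 : ℕ) : ZMod L) = -((n : ℕ) : ZMod L) := by
            apply hcast; omega
          rw [e, symm] at hcv
          linarith
  have chain : ∀ s m : ℕ, Odd m → ∀ n : ℕ, n = m + 2 * s → 2 * n < L → g n ≤ g m := by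
    intro s
    induction s with
    | zero => intro m hm n hn _; rw [hn]; simp
    | succ s ih =>
      intro m hm n hn h2
      obtain ⟨b, hb⟩ := hm
      have h1 : g n ≤ g ((n - 2 : ℕ)) :=
        step (L - n) n le_rfl ⟨b + s + 1, by omega⟩ (by omega) (by omega)
      have h2' : g ((n - 2 : ℕ)) ≤ g m := ih m ⟨b, hb⟩ (n - 2) (by omega) (by omega)
      linarith
  obtain ⟨a, ha⟩ := hm
  obtain ⟨b, hb⟩ := hn
  exact chain (b - a) m ⟨a, ha⟩ n (by omega) hnL

/-! ### The functions `A_u` and their properties -/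

section Main

set_option linter.unusedSectionVars false

variable {d L : ℕ} [NeZero L] {Sig : Type*}
  (AL : Subalgebra ℝ (MState d L Sig → ℝ))
  (phi : (MState d L Sig → ℝ) →ₗ[ℝ] ℝ)
  (f1 f2 : Sig → ℝ) (i : Fin d) (y : Torus d L)

/-- `A_u = F²_u ∏_{z ∈ T⁺ ∖ {u}} F¹_z`. -/
noncomputable def Afun (u : Torus d L) : MState d L Sig → ℝ :=
  fun w => f2 (w u) * ∏ z ∈ (posHalf d L i 1).erase u, f1 (w z)

lemma Afun_mem (hF1 : ∀ x : Torus d L, site f1 x ∈ AL)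
    (hF2 : ∀ x : Torus d L, site f2 x ∈ AL) (u : Torus d L) :
    Afun f1 f2 i u ∈ AL := by
  have h : Afun f1 f2 i u =
      site f2 u * ∏ z ∈ (posHalf d L i 1).erase u, site f1 z := by
    funext w
    simp [Afun, site, Finset.prod_apply]
  rw [h]
  exact mul_mem (hF2 u) (Subalgebra.prod_mem _ fun z _ => hF1 z)

lemma Afun_domain {u : Torus d L} (hu : u ∈ posHalf d L i 1) :
    HasDomain (Afun f1 f2 i u) ↑(posHalf d L i 1) := by
  intro w₁ w₂ h
  unfold Afun
  rw [h u hu]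
  congr 1
  exact Finset.prod_congr rfl fun z hz => by rw [h z (Finset.mem_of_mem_erase hz)]

lemma HasDomain.add' {A B : MState d L Sig → ℝ} {D : Set (Torus d L)}
    (hA : HasDomain A D) (hB : HasDomain B D) : HasDomain (A + B) D := by
  intro w₁ w₂ h
  simp only [Pi.add_apply, hA w₁ w₂ h, hB w₁ w₂ h]

lemma HasDomain.sub' {A B : MState d L Sig → ℝ} {D : Set (Torus d L)}
    (hA : HasDomain A D) (hB : HasDomain B D) : HasDomain (A - B) D := by
  intro w₁ w₂ h
  simp only [Pi.sub_apply, hA w₁ w₂ h, hB w₁ w₂ h]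

lemma reflectFun_add (t : ℕ) (A B : MState d L Sig → ℝ) :
    reflectFun i t (A + B) = reflectFun i t A + reflectFun i t B := rfl

lemma reflectFun_sub (t : ℕ) (A B : MState d L Sig → ℝ) :
    reflectFun i t (A - B) = reflectFun i t A - reflectFun i t B := rfl

/-- The key pointwise identity: `A_u · θA_v` is the integrand of `G(u, θv)`. -/
lemma phi_Afun_mul (hL : Even L) {u v : Torus d L}
    (hu : u ∈ posHalf d L i 1) (hv : v ∈ posHalf d L i 1) :
    phi (Afun f1 f2 i u * reflectFun i 1 (Afun f1 f2 i v)) =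
      twoPoint phi f1 f2 u (reflect i 1 v) := by
  have hvr : reflect i 1 v ∉ posHalf d L i 1 := notMem_of_reflect_one_mem hL hv
  unfold twoPoint
  congr 1
  funext w
  have h1 : (Afun f1 f2 i u * reflectFun i 1 (Afun f1 f2 i v)) w =
      (f2 (w u) * ∏ z ∈ (posHalf d L i 1).erase u, f1 (w z)) *
      (f2 (w (reflect i 1 v)) *
        ∏ z ∈ (posHalf d L i 1).erase v, f1 (w (reflect i 1 z))) := rfl
  rw [h1]
  have h2 : ∏ z ∈ (posHalf d L i 1).erase v, f1 (w (reflect i 1 z)) =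
      ∏ z ∈ ((posHalf d L i 1).erase v).image (reflect i 1), f1 (w z) :=
    (Finset.prod_image (f := fun z => f1 (w z))
      (fun a _ b _ hab => reflect_injective i 1 hab)).symm
  have h3 : ((posHalf d L i 1).erase v).image (reflect i 1) =
      ((posHalf d L i 1)ᶜ).erase (reflect i 1 v) := by
    rw [Finset.image_erase (reflect_injective i 1), image_reflect_posHalf hL]
  rw [h2, h3]
  have hdisj : Disjoint ((posHalf d L i 1).erase u)
      (((posHalf d L i 1)ᶜ).erase (reflect i 1 v)) := by
    refine Finset.disjoint_left.mpr fun b hb hb' => ?_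
    exact (Finset.mem_compl.mp (Finset.mem_of_mem_erase hb')) (Finset.mem_of_mem_erase hb)
  have hun : ((posHalf d L i 1).erase u) ∪ (((posHalf d L i 1)ᶜ).erase (reflect i 1 v)) =
      (Finset.univ.erase u).erase (reflect i 1 v) := by
    ext b
    simp only [Finset.mem_union, Finset.mem_erase, Finset.mem_compl, Finset.mem_univ, and_true]
    by_cases hb : b ∈ posHalf d L i 1
    · constructor
      · rintro (⟨hbu, -⟩ | ⟨hbv, hbP⟩)
        · exact ⟨fun h => hvr (h ▸ hb), hbu⟩
        · exact absurd hb hbP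
      · rintro ⟨hbv, hbu⟩
        exact Or.inl ⟨hbu, hb⟩
    · constructor
      · rintro (⟨-, hbP⟩ | ⟨hbv, -⟩)
        · exact absurd hbP hb
        · exact ⟨hbv, fun h => hb (h ▸ hu)⟩
      · rintro ⟨hbv, hbu⟩
        exact Or.inr ⟨hbv, hb⟩
  rw [← hun, Finset.prod_union hdisj]
  ring

/-! ### Consequences of torus symmetry -/

lemma twoPoint_comm (x z : Torus d L) :
    twoPoint phi f1 f2 x z = twoPoint phi f1 f2 z x := by
  unfold twoPoint
  congr 1
  funext w
  rw [Finset.erase_right_comm]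
  ring

lemma twoPoint_eq_symform {x z : Torus d L} (hxz : x ≠ z) :
    twoPoint phi f1 f2 x z =
      phi (fun w => (∏ a ∈ (Finset.univ.erase x).erase z, f1 (w a)) *
        ∏ a ∈ ({x, z} : Finset (Torus d L)), f2 (w a)) := by
  unfold twoPoint
  congr 1
  funext w
  rw [Finset.prod_pair hxz]
  ring

lemma twoPoint_translate (hsym : TorusSymmetric phi f1 f2) {x z : Torus d L}
    (v : Torus d L) (hxz : x ≠ z) :
    twoPoint phi f1 f2 x z = twoPoint phi f1 f2 (x + v) (z + v) := by
  have hxz' : x + v ≠ z + v := fun h => hxz (by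
    have := congrArg (fun p => p - v) h
    simpa using this)
  rw [twoPoint_eq_symform phi f1 f2 hxz, twoPoint_eq_symform phi f1 f2 hxz',
    hsym ((Finset.univ.erase x).erase z) {x, z} v]
  congr 1
  funext w
  have hinj : ∀ a ∈ (Finset.univ.erase x).erase z, ∀ b ∈ (Finset.univ.erase x).erase z,
      a + v = b + v → a = b := by
    intro a _ b _ hab
    have := congrArg (fun p => p - v) hab
    simpa using this
  congr 1
  · have hpi := Finset.prod_image (f := fun a => f1 (w a)) hinj
    rw [← hpi]
    congr 1
    ext b
    simp only [Finset.mem_image, Finset.mem_erase, Finset.mem_univ, and_true]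
    constructor
    · rintro ⟨a, ⟨haz, hax⟩, rfl⟩
      refine ⟨fun h => haz ?_, fun h => hax ?_⟩
      · have := congrArg (fun p => p - v) h; simpa using this
      · have := congrArg (fun p => p - v) h; simpa using this
    · rintro ⟨hbz, hbx⟩
      refine ⟨b - v, ⟨fun h => hbz (sub_eq_iff_eq_add.mp h), fun h => hbx (sub_eq_iff_eq_add.mp h)⟩, by ring⟩
  · have hpair : ∀ a ∈ ({x, z} : Finset (Torus d L)), ∀ b ∈ ({x, z} : Finset (Torus d L)),
        a + v = b + v → a = b := by
      intro a _ b _ hab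
      have := congrArg (fun p => p - v) hab
      simpa using this
    have hpi2 := Finset.prod_image (f := fun a => f2 (w a)) hpair
    rw [← hpi2]
    congr 1
    ext b
    simp only [Finset.mem_image, Finset.mem_insert, Finset.mem_singleton]
    constructor
    · rintro ⟨a, (rfl | rfl), rfl⟩
      · exact Or.inl rfl
      · exact Or.inr rfl
    · rintro (rfl | rfl)
      · exact ⟨x, Or.inl rfl, rfl⟩
      · exact ⟨z, Or.inr rfl, rfl⟩

lemma twoPoint_zero (hsym : TorusSymmetric phi f1 f2) {x z : Torus d L} (hxz : x ≠ z) :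
    twoPoint phi f1 f2 x z = twoPoint phi f1 f2 0 (z - x) := by
  have h := twoPoint_translate phi f1 f2 hsym (-x) hxz
  rw [h]
  congr 1 <;> ring

lemma twoPoint_neg (hsym : TorusSymmetric phi f1 f2) (z : Torus d L) :
    twoPoint phi f1 f2 0 (-z) = twoPoint phi f1 f2 0 z := by
  rcases eq_or_ne z 0 with rfl | hz
  · rw [neg_zero]
  · have h1 : (-z : Torus d L) ≠ 0 := fun h => hz (by
      have := congrArg (fun p => -p) h
      simpa using this)
    rw [twoPoint_comm phi f1 f2 0 (-z), twoPoint_zero phi f1 f2 hsym h1]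
    congr 1
    ring

end Main

/-! ### The key reflection positivity estimates -/

section Cross

set_option linter.unusedSectionVars false

variable {d L : ℕ} [NeZero L] {Sig : Type*}
  (AL : Subalgebra ℝ (MState d L Sig → ℝ))
  (phi : (MState d L Sig → ℝ) →ₗ[ℝ] ℝ)
  (f1 f2 : Sig → ℝ) (i : Fin d) (y : Torus d L)

lemma axis_mem_posHalf {a : ZMod L} (ha : (a - 1).val < L / 2) :
    axis i a ∈ posHalf d L i 1 := by
  rw [mem_posHalf_one, axis_apply_self]
  exact ha

lemma add_axis_mem_posHalf {a : ZMod L} (hy : y i = 0) (ha : (a - 1).val < L / 2) :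
    y + axis i a ∈ posHalf d L i 1 := by
  rw [mem_posHalf_one]
  have : (y + axis i a) i = a := by simp [Pi.add_apply, axis_apply_self, hy]
  rw [this]
  exact ha

lemma ne_reflect_of_mem (hL : Even L) {u v : Torus d L}
    (hu : u ∈ posHalf d L i 1) (hv : v ∈ posHalf d L i 1) : u ≠ reflect i 1 v :=
  fun h => notMem_of_reflect_one_mem hL hv (h ▸ hu)

lemma cross (hL : Even L) (hy : y i = 0)
    (hF1 : ∀ x : Torus d L, site f1 x ∈ AL) (hF2 : ∀ x : Torus d L, site f2 x ∈ AL)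
    (hRP : RPEdges AL phi) (hsym : TorusSymmetric phi f1 f2)
    (a a' : ZMod L) (ha : (a - 1).val < L / 2) (ha' : (a' - 1).val < L / 2) :
    phi ((Afun f1 f2 i (axis i a) + Afun f1 f2 i (y + axis i a)) *
        reflectFun i 1 (Afun f1 f2 i (axis i a') + Afun f1 f2 i (y + axis i a'))) =
      2 * (twoPoint phi f1 f2 0 (y + axis i (1 - a - a')) +
        twoPoint phi f1 f2 0 (axis i (1 - a - a'))) := by
  have hLpos : (0 : ℕ) < L := NeZero.pos L
  have hm1 : axis i a ∈ posHalf d L i 1 := axis_mem_posHalf i ha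
  have hm2 : y + axis i a ∈ posHalf d L i 1 := add_axis_mem_posHalf i y hy ha
  have hm1' : axis i a' ∈ posHalf d L i 1 := axis_mem_posHalf i ha'
  have hm2' : y + axis i a' ∈ posHalf d L i 1 := add_axis_mem_posHalf i y hy ha'
  have e2 : (1 : ZMod L) - a' - a = 1 - a - a' := by ring
  have hdistr : (Afun f1 f2 i (axis i a) + Afun f1 f2 i (y + axis i a)) *
      reflectFun i 1 (Afun f1 f2 i (axis i a') + Afun f1 f2 i (y + axis i a')) =
      Afun f1 f2 i (axis i a) * reflectFun i 1 (Afun f1 f2 i (axis i a'))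
      + Afun f1 f2 i (axis i a) * reflectFun i 1 (Afun f1 f2 i (y + axis i a'))
      + Afun f1 f2 i (y + axis i a) * reflectFun i 1 (Afun f1 f2 i (axis i a'))
      + Afun f1 f2 i (y + axis i a) * reflectFun i 1 (Afun f1 f2 i (y + axis i a')) := by
    rw [reflectFun_add]
    ring
  rw [hdistr, map_add, map_add, map_add]
  -- term (1,1)
  have T11 : phi (Afun f1 f2 i (axis i a) * reflectFun i 1 (Afun f1 f2 i (axis i a'))) =
      twoPoint phi f1 f2 0 (axis i (1 - a - a')) := by
    rw [phi_Afun_mul phi f1 f2 i hL hm1 hm1', reflect_one_axis,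
      twoPoint_zero phi f1 f2 hsym ((reflect_one_axis i a') ▸ ne_reflect_of_mem i hL hm1 hm1'),
      axis_sub, e2]
  -- term (1,2)
  have T12 : phi (Afun f1 f2 i (axis i a) * reflectFun i 1 (Afun f1 f2 i (y + axis i a'))) =
      twoPoint phi f1 f2 0 (y + axis i (1 - a - a')) := by
    rw [phi_Afun_mul phi f1 f2 i hL hm1 hm2', reflect_one_add_axis hy,
      twoPoint_zero phi f1 f2 hsym
        ((reflect_one_add_axis hy a') ▸ ne_reflect_of_mem i hL hm1 hm2')]
    rw [add_sub_assoc, axis_sub, e2]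
  -- term (2,1) : use the RP symmetry
  have T21 : phi (Afun f1 f2 i (y + axis i a) * reflectFun i 1 (Afun f1 f2 i (axis i a'))) =
      twoPoint phi f1 f2 0 (y + axis i (1 - a - a')) := by
    have hswap := (hRP i 1 (by omega) rfl (Afun f1 f2 i (y + axis i a))
      (Afun f1 f2 i (axis i a')) (Afun_mem AL f1 f2 i hF1 hF2 _) (Afun_mem AL f1 f2 i hF1 hF2 _)
      (Afun_domain f1 f2 i hm2) (Afun_domain f1 f2 i hm1')).1
    rw [hswap, phi_Afun_mul phi f1 f2 i hL hm1' hm2, reflect_one_add_axis hy,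
      twoPoint_zero phi f1 f2 hsym
        ((reflect_one_add_axis hy a) ▸ ne_reflect_of_mem i hL hm1' hm2)]
    have e2' : (1 : ZMod L) - a - a' = 1 - a - a' := by ring
    rw [add_sub_assoc, axis_sub, e2']
  -- term (2,2)
  have T22 : phi (Afun f1 f2 i (y + axis i a) * reflectFun i 1 (Afun f1 f2 i (y + axis i a'))) =
      twoPoint phi f1 f2 0 (axis i (1 - a - a')) := by
    rw [phi_Afun_mul phi f1 f2 i hL hm2 hm2', reflect_one_add_axis hy,
      twoPoint_zero phi f1 f2 hsym
        ((reflect_one_add_axis hy a') ▸ ne_reflect_of_mem i hL hm2 hm2')]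
    have e : (y + axis i (1 - a')) - (y + axis i a) = axis i (1 - a') - axis i a := by ring
    rw [e, axis_sub, e2]
  rw [T11, T12, T21, T22]
  ring

lemma bridge (hL : Even L) (hy : y i = 0)
    (hF1 : ∀ x : Torus d L, site f1 x ∈ AL) (hF2 : ∀ x : Torus d L, site f2 x ∈ AL)
    (hRP : RPEdges AL phi) (hsym : TorusSymmetric phi f1 f2)
    (a a' : ZMod L) (ha : (a - 1).val < L / 2) (ha' : (a' - 1).val < L / 2) :
    2 * (twoPoint phi f1 f2 0 (y + axis i (1 - a - a')) +
        twoPoint phi f1 f2 0 (axis i (1 - a - a'))) ≤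
      (twoPoint phi f1 f2 0 (y + axis i (1 - a - a)) +
        twoPoint phi f1 f2 0 (axis i (1 - a - a)))
      + (twoPoint phi f1 f2 0 (y + axis i (1 - a' - a')) +
        twoPoint phi f1 f2 0 (axis i (1 - a' - a'))) := by
  have hLpos : (0 : ℕ) < L := NeZero.pos L
  set A := Afun f1 f2 i (axis i a) + Afun f1 f2 i (y + axis i a) with hA
  set B := Afun f1 f2 i (axis i a') + Afun f1 f2 i (y + axis i a') with hB
  have hAmem : A ∈ AL := add_mem (Afun_mem AL f1 f2 i hF1 hF2 _) (Afun_mem AL f1 f2 i hF1 hF2 _)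
  have hBmem : B ∈ AL := add_mem (Afun_mem AL f1 f2 i hF1 hF2 _) (Afun_mem AL f1 f2 i hF1 hF2 _)
  have hAdom : HasDomain A ↑(posHalf d L i 1) :=
    (Afun_domain f1 f2 i (axis_mem_posHalf i ha)).add'
      (Afun_domain f1 f2 i (add_axis_mem_posHalf i y hy ha))
  have hBdom : HasDomain B ↑(posHalf d L i 1) :=
    (Afun_domain f1 f2 i (axis_mem_posHalf i ha')).add'
      (Afun_domain f1 f2 i (add_axis_mem_posHalf i y hy ha'))
  have hpos := (hRP i 1 (by omega) rfl (A - B) (A - B) (sub_mem hAmem hBmem)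
    (sub_mem hAmem hBmem) (hAdom.sub' hBdom) (hAdom.sub' hBdom)).2
  have hexp : (A - B) * reflectFun i 1 (A - B) =
      A * reflectFun i 1 A - A * reflectFun i 1 B
      - (B * reflectFun i 1 A - B * reflectFun i 1 B) := by
    rw [reflectFun_sub]
    ring
  rw [hexp, map_sub, map_sub, map_sub] at hpos
  have hswap := (hRP i 1 (by omega) rfl A B hAmem hBmem hAdom hBdom).1
  have hAA := cross AL phi f1 f2 i y hL hy hF1 hF2 hRP hsym a a ha ha
  have hAB := cross AL phi f1 f2 i y hL hy hF1 hF2 hRP hsym a a' ha ha'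
  have hBA := cross AL phi f1 f2 i y hL hy hF1 hF2 hRP hsym a' a ha' ha
  have hBB := cross AL phi f1 f2 i y hL hy hF1 hF2 hRP hsym a' a' ha' ha'
  have e : (1 : ZMod L) - a' - a = 1 - a - a' := by ring
  rw [e] at hBA
  rw [← hB] at hAB hBA hBB
  rw [hAA, hAB, hBA, hBB] at hpos
  linarith

lemma rp_sym_pt (hL : Even L) (hy : y i = 0)
    (hF1 : ∀ x : Torus d L, site f1 x ∈ AL) (hF2 : ∀ x : Torus d L, site f2 x ∈ AL)
    (hRP : RPEdges AL phi) (hsym : TorusSymmetric phi f1 f2)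
    (a a' : ZMod L) (ha : (a - 1).val < L / 2) (ha' : (a' - 1).val < L / 2) :
    twoPoint phi f1 f2 0 (axis i (1 - a - a') - y) =
      twoPoint phi f1 f2 0 (y + axis i (1 - a - a')) := by
  have hLpos : (0 : ℕ) < L := NeZero.pos L
  have hm2 : y + axis i a ∈ posHalf d L i 1 := add_axis_mem_posHalf i y hy ha
  have hm1' : axis i a' ∈ posHalf d L i 1 := axis_mem_posHalf i ha'
  have hswap := (hRP i 1 (by omega) rfl (Afun f1 f2 i (y + axis i a))
    (Afun f1 f2 i (axis i a')) (Afun_mem AL f1 f2 i hF1 hF2 _) (Afun_mem AL f1 f2 i hF1 hF2 _)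
    (Afun_domain f1 f2 i hm2) (Afun_domain f1 f2 i hm1')).1
  have hlhs : phi (Afun f1 f2 i (y + axis i a) * reflectFun i 1 (Afun f1 f2 i (axis i a'))) =
      twoPoint phi f1 f2 0 (axis i (1 - a - a') - y) := by
    rw [phi_Afun_mul phi f1 f2 i hL hm2 hm1', reflect_one_axis,
      twoPoint_zero phi f1 f2 hsym
        ((reflect_one_axis i a') ▸ ne_reflect_of_mem i hL hm2 hm1')]
    have e : axis i (1 - a') - (y + axis i a) = (axis i (1 - a') - axis i a) - y := by ring
    have e2 : (1 : ZMod L) - a' - a = 1 - a - a' := by ring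
    rw [e, axis_sub, e2]
  have hrhs : phi (Afun f1 f2 i (axis i a') * reflectFun i 1 (Afun f1 f2 i (y + axis i a))) =
      twoPoint phi f1 f2 0 (y + axis i (1 - a - a')) := by
    rw [phi_Afun_mul phi f1 f2 i hL hm1' hm2, reflect_one_add_axis hy,
      twoPoint_zero phi f1 f2 hsym
        ((reflect_one_add_axis hy a) ▸ ne_reflect_of_mem i hL hm1' hm2)]
    have e2' : (1 : ZMod L) - a - a' = 1 - a - a' := by ring
    rw [add_sub_assoc, axis_sub, e2']
  rw [← hlhs, hswap, hrhs]

end Cross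

section Final

set_option linter.unusedSectionVars false

variable {d L : ℕ} [NeZero L] {Sig : Type*}
  (AL : Subalgebra ℝ (MState d L Sig → ℝ))
  (phi : (MState d L Sig → ℝ) →ₗ[ℝ] ℝ)
  (f1 f2 : Sig → ℝ) (i : Fin d) (y : Torus d L)

lemma sym_y (hL : Even L) (hy : y i = 0)
    (hF1 : ∀ x : Torus d L, site f1 x ∈ AL) (hF2 : ∀ x : Torus d L, site f2 x ∈ AL)
    (hRP : RPEdges AL phi) (hsym : TorusSymmetric phi f1 f2) (c : ZMod L) :
    twoPoint phi f1 f2 0 (axis i c - y) = twoPoint phi f1 f2 0 (y + axis i c) := by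
  rcases eq_or_ne c 0 with rfl | hc
  · rw [axis_zero]
    have e1 : (0 : Torus d L) - y = -y := by ring
    have e2 : y + (0 : Torus d L) = y := by ring
    rw [e1, e2, twoPoint_neg phi f1 f2 hsym]
  · have hLpos : (0 : ℕ) < L := NeZero.pos L
    have hL2 : 2 ≤ L := by
      obtain ⟨t, ht⟩ := hL
      omega
    have key : ∀ j j' : ℕ, j < L / 2 → j' < L / 2 →
        ((j : ZMod L) + (j' : ZMod L) = -1 - c) →
        twoPoint phi f1 f2 0 (axis i c - y) = twoPoint phi f1 f2 0 (y + axis i c) := by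
      intro j j' hj hj' hjj
      have ha : (((j : ZMod L) + 1) - 1).val < L / 2 := by
        rw [add_sub_cancel_right, ZMod.val_natCast_of_lt (by omega)]
        exact hj
      have ha' : (((j' : ZMod L) + 1) - 1).val < L / 2 := by
        rw [add_sub_cancel_right, ZMod.val_natCast_of_lt (by omega)]
        exact hj'
      have harg : (1 : ZMod L) - ((j : ZMod L) + 1) - ((j' : ZMod L) + 1) = c := by
        linear_combination -hjj
      have h := rp_sym_pt AL phi f1 f2 i y hL hy hF1 hF2 hRP hsym
        ((j : ZMod L) + 1) ((j' : ZMod L) + 1) ha ha'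
      rw [harg] at h
      exact h
    set s := (-1 - c).val with hs
    have hsval : ((s : ℕ) : ZMod L) = -1 - c := ZMod.natCast_rightInverse _
    have hsL : s < L := ZMod.val_lt _
    have hsne : s ≠ L - 1 := by
      intro h
      apply hc
      have h2 : ((L - 1 : ℕ) : ZMod L) = -1 := by
        have h3 : (((L - 1) + 1 : ℕ) : ZMod L) = 0 := by
          rw [(by omega : L - 1 + 1 = L)]
          exact ZMod.natCast_self L
        push_cast at h3
        linear_combination h3
      rw [h, h2] at hsval
      linear_combination hsval
    obtain ⟨t, ht⟩ := hL
    rcases le_or_gt s (L / 2 - 1) with hcase | hcase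
    · refine key s 0 (by omega) (by omega) ?_
      rw [Nat.cast_zero, add_zero]
      exact hsval
    · refine key (L / 2 - 1) (s - (L / 2 - 1)) (by omega) (by omega) ?_
      rw [← Nat.cast_add]
      have : L / 2 - 1 + (s - (L / 2 - 1)) = s := by omega
      rw [this]
      exact hsval

lemma gfun_neg (hL : Even L) (hy : y i = 0)
    (hF1 : ∀ x : Torus d L, site f1 x ∈ AL) (hF2 : ∀ x : Torus d L, site f2 x ∈ AL)
    (hRP : RPEdges AL phi) (hsym : TorusSymmetric phi f1 f2) (c : ZMod L) :
    twoPoint phi f1 f2 0 (y + axis i (-c)) + twoPoint phi f1 f2 0 (axis i (-c)) =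
      twoPoint phi f1 f2 0 (y + axis i c) + twoPoint phi f1 f2 0 (axis i c) := by
  have h1 : twoPoint phi f1 f2 0 (axis i (-c)) = twoPoint phi f1 f2 0 (axis i c) := by
    rw [axis_neg, twoPoint_neg phi f1 f2 hsym]
  have h2 : twoPoint phi f1 f2 0 (y + axis i (-c)) = twoPoint phi f1 f2 0 (y + axis i c) := by
    have e : y + axis i (-c) = -(axis i c - y) := by
      rw [axis_neg]
      ring
    rw [e, twoPoint_neg phi f1 f2 hsym, sym_y AL phi f1 f2 i y hL hy hF1 hF2 hRP hsym]
  rw [h1, h2]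

lemma convN (hL : Even L) (hy : y i = 0)
    (hF1 : ∀ x : Torus d L, site f1 x ∈ AL) (hF2 : ∀ x : Torus d L, site f2 x ∈ AL)
    (hRP : RPEdges AL phi) (hsym : TorusSymmetric phi f1 f2)
    (j j' : ℕ) (hj : j < L / 2) (hj' : j' < L / 2) :
    2 * (twoPoint phi f1 f2 0 (y + axis i ((1 + j + j' : ℕ) : ZMod L)) +
        twoPoint phi f1 f2 0 (axis i ((1 + j + j' : ℕ) : ZMod L))) ≤
      (twoPoint phi f1 f2 0 (y + axis i ((1 + 2 * j : ℕ) : ZMod L)) +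
        twoPoint phi f1 f2 0 (axis i ((1 + 2 * j : ℕ) : ZMod L)))
      + (twoPoint phi f1 f2 0 (y + axis i ((1 + 2 * j' : ℕ) : ZMod L)) +
        twoPoint phi f1 f2 0 (axis i ((1 + 2 * j' : ℕ) : ZMod L))) := by
  have hLpos : (0 : ℕ) < L := NeZero.pos L
  have ha : (((j : ZMod L) + 1) - 1).val < L / 2 := by
    rw [add_sub_cancel_right, ZMod.val_natCast_of_lt (by omega)]
    exact hj
  have ha' : (((j' : ZMod L) + 1) - 1).val < L / 2 := by
    rw [add_sub_cancel_right, ZMod.val_natCast_of_lt (by omega)]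
    exact hj'
  have hb := bridge AL phi f1 f2 i y hL hy hF1 hF2 hRP hsym
    ((j : ZMod L) + 1) ((j' : ZMod L) + 1) ha ha'
  have e1 : (1 : ZMod L) - ((j : ZMod L) + 1) - ((j' : ZMod L) + 1) =
      -(((1 + j + j' : ℕ) : ZMod L)) := by
    push_cast
    ring
  have e2 : (1 : ZMod L) - ((j : ZMod L) + 1) - ((j : ZMod L) + 1) =
      -(((1 + 2 * j : ℕ) : ZMod L)) := by
    push_cast
    ring
  have e3 : (1 : ZMod L) - ((j' : ZMod L) + 1) - ((j' : ZMod L) + 1) =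
      -(((1 + 2 * j' : ℕ) : ZMod L)) := by
    push_cast
    ring
  rw [e1, e2, e3, gfun_neg AL phi f1 f2 i y hL hy hF1 hF2 hRP hsym,
    gfun_neg AL phi f1 f2 i y hL hy hF1 hF2 hRP hsym,
    gfun_neg AL phi f1 f2 i y hL hy hF1 hF2 hRP hsym] at hb
  exact hb

end Final

/-- If `⟨·⟩` is reflection positive for reflections through edges and the two-point function
is torus symmetric, then for `y·e i = 0` the function
`n ↦ G_L(o, y + n e i) + G_L(o, n e i)` is non-increasing in odd `n ∈ (0, L/2)`. -/
theorem statement2 {d L : ℕ} [NeZero L] (hd : 2 ≤ d) (hL : Even L) {Sig : Type*}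
    (AL : Subalgebra ℝ (MState d L Sig → ℝ)) (hfin : FiniteDimensional ℝ AL)
    (phi : (MState d L Sig → ℝ) →ₗ[ℝ] ℝ) (hone : phi 1 = 1)
    (f1 f2 : Sig → ℝ)
    (hF1 : ∀ x : Torus d L, site f1 x ∈ AL) (hF2 : ∀ x : Torus d L, site f2 x ∈ AL)
    (hRP : RPEdges AL phi) (hsym : TorusSymmetric phi f1 f2)
    (i : Fin d) (y : Torus d L) (hy : y i = 0)
    (m n : ℕ) (hm : Odd m) (hn : Odd n) (hmn : m ≤ n) (hnL : 2 * n < L) :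
    twoPoint phi f1 f2 0 (y + axis i (n : ZMod L)) + twoPoint phi f1 f2 0 (axis i (n : ZMod L)) ≤
      twoPoint phi f1 f2 0 (y + axis i (m : ZMod L)) + twoPoint phi f1 f2 0 (axis i (m : ZMod L)) := by
  refine endgame hL
    (fun c => twoPoint phi f1 f2 0 (y + axis i c) + twoPoint phi f1 f2 0 (axis i c))
    (fun j j' hj hj' => ?_) (fun c => ?_) m n hm hn hmn hnL
  · exact convN AL phi f1 f2 i y hL hy hF1 hF2 hRP hsym j j' hj hj'
  · exact gfun_neg AL phi f1 f2 i y hL hy hF1 hF2 hRP hsym c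

end RPPaper
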